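/- Let n, p be integers with n − 1 ≥ p ≥ 1 and n − p − 1 ≥ 2, and let W be a p×p real symmetric positive definite matrix. For c > 0 define V(c) = (W + α̂(c) I_p)⁻¹, â_S(c) = ((n − p − 1)·tr V(c) + α̂(c)·(tr V(c))²)/tr(V(c)² W) − (2c₀(c) + 1), and b̂_S(c) = ((n−1)p − 2) − tr(V(c) W)·â_S(c), where either α̂(c) = c with c₀(c) = 0, or α̂(c) = c·tr W with c₀(c) = c. Then in both cases lim_{c → 0⁺} b̂_S(c) = p² + p − 2 = min{(n−1)² + (n−1) − 2, p² + p − 2}. -/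

import Mathlib

set_option maxHeartbeats 1000000


open Matrix Filter

/-- `V = (W + α I_p)⁻¹`. -/
noncomputable def Vr (p : ℕ) (W : Matrix (Fin p) (Fin p) ℝ) (α : ℝ) :
    Matrix (Fin p) (Fin p) ℝ :=
  (W + α • 1)⁻¹

/-- The SURE-minimizing weight `â_S` as a function of `W`, the ridge value `α` and `c₀`. -/
noncomputable def aSv (n p : ℕ) (W : Matrix (Fin p) (Fin p) ℝ) (α c0 : ℝ) : ℝ :=
  (((n : ℝ) - p - 1) * (Vr p W α).trace + α * ((Vr p W α).trace) ^ 2) /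
      (Vr p W α * Vr p W α * W).trace
    - (2 * c0 + 1)

/-- The SURE-minimizing second weight `b̂_S`. -/
noncomputable def bSv (n p : ℕ) (W : Matrix (Fin p) (Fin p) ℝ) (α c0 : ℝ) : ℝ :=
  (((n : ℝ) - 1) * p - 2) - (Vr p W α * W).trace * aSv n p W α c0

private lemma posdef_trace_pos {p : ℕ} (hp : 1 ≤ p) {A : Matrix (Fin p) (Fin p) ℝ}
    (hA : A.PosDef) : 0 < A.trace := by
  haveI : Nonempty (Fin p) := Fin.pos_iff_nonempty.mp hp
  rw [Matrix.trace]
  apply Finset.sum_pos _ Finset.univ_nonempty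
  intro i _
  have := hA.diag_pos (i := i)
  simpa using this

private lemma continuousAt_Vr (p : ℕ) (W : Matrix (Fin p) (Fin p) ℝ) (hW : W.PosDef) :
    ContinuousAt (fun α : ℝ => Vr p W α) 0 := by
  have hF : Continuous (fun α : ℝ => W + α • (1 : Matrix (Fin p) (Fin p) ℝ)) :=
    continuous_const.add (continuous_id.smul continuous_const)
  have hinv : ContinuousAt Inv.inv (W + (0:ℝ) • (1 : Matrix (Fin p) (Fin p) ℝ)) := by
    apply continuousAt_matrix_inv
    rw [Ring.inverse_eq_inv']
    apply continuousAt_inv₀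
    simpa using hW.det_pos.ne'
  exact ContinuousAt.comp (x := (0:ℝ))
    (f := fun α : ℝ => W + α • (1 : Matrix (Fin p) (Fin p) ℝ)) hinv hF.continuousAt

private lemma Vr_zero {p : ℕ} (W : Matrix (Fin p) (Fin p) ℝ) : Vr p W 0 = W⁻¹ := by
  simp [Vr]

private lemma bSv_zero (n p : ℕ) (hp : 1 ≤ p) (W : Matrix (Fin p) (Fin p) ℝ)
    (hW : W.PosDef) : bSv n p W 0 0 = (p : ℝ) ^ 2 + p - 2 := by
  have hdet : IsUnit W.det := isUnit_iff_ne_zero.mpr hW.det_pos.ne'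
  have h1 : W⁻¹ * W = 1 := Matrix.nonsing_inv_mul W hdet
  have tpos : 0 < (W⁻¹).trace := posdef_trace_pos hp hW.inv
  have den0 : (W⁻¹ * W⁻¹ * W).trace = (W⁻¹).trace := by
    rw [mul_assoc, h1, mul_one]
  have ha : aSv n p W 0 0 = (n : ℝ) - p - 2 := by
    rw [aSv, Vr_zero, den0, zero_mul, add_zero, mul_div_assoc, div_self tpos.ne']
    ring
  rw [bSv, Vr_zero, h1, ha, Matrix.trace_one]
  simp only [Finset.card_univ, Fintype.card_fin]
  ring

private lemma continuousAt_bSv (n p : ℕ) (hp : 1 ≤ p) (W : Matrix (Fin p) (Fin p) ℝ)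
    (hW : W.PosDef) :
    ContinuousAt (fun q : ℝ × ℝ => bSv n p W q.1 q.2) (0, 0) := by
  have hdet : IsUnit W.det := isUnit_iff_ne_zero.mpr hW.det_pos.ne'
  have h1 : W⁻¹ * W = 1 := Matrix.nonsing_inv_mul W hdet
  have tpos : 0 < (W⁻¹).trace := posdef_trace_pos hp hW.inv
  have htrace : Continuous (fun A : Matrix (Fin p) (Fin p) ℝ => A.trace) :=
    continuous_id.matrix_trace
  have hV : ContinuousAt (fun q : ℝ × ℝ => Vr p W q.1) (0, 0) :=
    ContinuousAt.comp (f := fun q : ℝ × ℝ => q.1) (x := ((0:ℝ), (0:ℝ))) (continuousAt_Vr p W hW) continuousAt_fst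
  have hVt : ContinuousAt (fun q : ℝ × ℝ => (Vr p W q.1).trace) (0, 0) :=
    htrace.continuousAt.comp hV
  have hden : ContinuousAt (fun q : ℝ × ℝ => (Vr p W q.1 * Vr p W q.1 * W).trace) (0, 0) :=
    htrace.continuousAt.comp ((hV.mul hV).mul continuousAt_const)
  have hden0 : (Vr p W (0:ℝ) * Vr p W (0:ℝ) * W).trace ≠ 0 := by
    rw [Vr_zero, mul_assoc, h1, mul_one]
    exact tpos.ne'
  have hnum : ContinuousAt
      (fun q : ℝ × ℝ => ((n : ℝ) - p - 1) * (Vr p W q.1).trace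
        + q.1 * ((Vr p W q.1).trace) ^ 2) (0, 0) :=
    ((continuousAt_const.mul hVt).add (continuousAt_fst.mul (hVt.pow 2)))
  have ha : ContinuousAt (fun q : ℝ × ℝ => aSv n p W q.1 q.2) (0, 0) := by
    unfold aSv
    exact (hnum.div hden hden0).sub
      ((continuousAt_const.mul continuousAt_snd).add continuousAt_const)
  have hVW : ContinuousAt (fun q : ℝ × ℝ => (Vr p W q.1 * W).trace) (0, 0) :=
    htrace.continuousAt.comp (hV.mul continuousAt_const)
  unfold bSv
  exact continuousAt_const.sub (hVW.mul ha)

/-- As c → 0⁺, the estimated weight b̂_S(c) converges to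
p² + p − 2 = min{(n−1)² + (n−1) − 2, p² + p − 2}, both for α̂ = c (c₀ = 0)
and for α̂ = c·tr W (c₀ = c). -/
theorem bS_tendsto_zero (n p : ℕ) (hp : 1 ≤ p) (hn1 : p + 1 ≤ n) (hn3 : p + 3 ≤ n)
    (W : Matrix (Fin p) (Fin p) ℝ) (hW : W.PosDef) :
    (Tendsto (fun c : ℝ => bSv n p W c 0)
        (nhdsWithin 0 (Set.Ioi 0)) (nhds ((p : ℝ) ^ 2 + p - 2)) ∧
      Tendsto (fun c : ℝ => bSv n p W (c * W.trace) c)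
        (nhdsWithin 0 (Set.Ioi 0)) (nhds ((p : ℝ) ^ 2 + p - 2))) ∧
    (p : ℝ) ^ 2 + p - 2
      = min (((n : ℝ) - 1) ^ 2 + ((n : ℝ) - 1) - 2) ((p : ℝ) ^ 2 + p - 2) := by
  have hcont := continuousAt_bSv n p hp W hW
  have hval := bSv_zero n p hp W hW
  constructor
  · constructor
    · have h1 : ContinuousAt (fun c : ℝ => bSv n p W c 0) 0 := by
        have hpair : ContinuousAt (fun c : ℝ => ((c, (0:ℝ)) : ℝ × ℝ)) 0 :=
          continuousAt_id.prodMk continuousAt_const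
        have h := hcont.comp_of_eq hpair rfl
        simpa [Function.comp_def] using h
      have := h1.tendsto.mono_left (nhdsWithin_le_nhds (s := Set.Ioi (0:ℝ)))
      simpa [hval] using this
    · have h2 : ContinuousAt (fun c : ℝ => bSv n p W (c * W.trace) c) 0 := by
        have : ContinuousAt (fun c : ℝ => ((c * W.trace, c) : ℝ × ℝ)) 0 :=
          (continuousAt_id.mul continuousAt_const).prodMk continuousAt_id
        have h := hcont.comp_of_eq this (by simp : ((0:ℝ) * W.trace, (0:ℝ)) = ((0:ℝ), (0:ℝ)))
        simpa [Function.comp_def] using h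
      have := h2.tendsto.mono_left (nhdsWithin_le_nhds (s := Set.Ioi (0:ℝ)))
      simpa [hval] using this
  · have hpn : (p : ℝ) ≤ (n : ℝ) - 1 := by
      have : (p : ℝ) + 1 ≤ (n : ℝ) := by exact_mod_cast hn1
      linarith
    have hp0 : (0 : ℝ) < p := by exact_mod_cast hp
    rw [min_eq_right]
    nlinarith
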